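/- Let R = ⊕_{n≥0} R_n be a positively graded algebra over a commutative ring K such that each R_n is a finitely generated K-module. Then R is generated in finite degrees (i.e., some truncation R_0 ⊕ ... ⊕ R_m generates R as a ring) if and only if R is finitely generated as a K-algebra. -/
import Mathlib


/-- A positively graded algebra `R = ⊕ₙ Rₙ` over a commutative ring `K` whose
homogeneous components are finitely generated `K`-modules is generated in finite
degrees (some truncation `R₀ ⊕ ... ⊕ Rₘ` generates `R` as a ring) iff `R` is
finitely generated as a `K`-algebra. -/
theorem stmt_6 (K R : Type) [CommRing K] [Ring R] [Algebra K R]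
    (𝒜 : ℕ → Submodule K R) [GradedAlgebra 𝒜]
    (hfg : ∀ n, (𝒜 n).FG) :
    (∃ m : ℕ, Subring.closure (⋃ i ∈ Finset.range (m + 1), (𝒜 i : Set R)) = ⊤) ↔
      Algebra.FiniteType K R := by
  classical
  constructor
  · rintro ⟨m, hm⟩
    choose s hs using hfg
    refine ⟨⟨(Finset.range (m + 1)).biUnion s, ?_⟩⟩
    have hle : Subring.closure (⋃ i ∈ Finset.range (m + 1), (𝒜 i : Set R)) ≤
        (Algebra.adjoin K (((Finset.range (m + 1)).biUnion s : Finset R) : Set R)).toSubring := by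
      rw [Subring.closure_le]
      intro x hx
      simp only [Set.mem_iUnion] at hx
      obtain ⟨i, hi, hxi⟩ := hx
      have hsub : (𝒜 i) ≤ Subalgebra.toSubmodule
          (Algebra.adjoin K (((Finset.range (m + 1)).biUnion s : Finset R) : Set R)) := by
        rw [← hs i, Submodule.span_le]
        intro y hy
        exact Algebra.subset_adjoin (by
          simp only [Finset.coe_biUnion, Set.mem_iUnion]
          exact ⟨i, hi, hy⟩)
      exact hsub hxi
    rw [eq_top_iff]
    intro x _
    exact hle (hm ▸ Subring.mem_top x)
  · rintro ⟨S, hS⟩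
    set m : ℕ := S.sup fun x => (DirectSum.decompose 𝒜 x).support.sup id with hm
    refine ⟨m, ?_⟩
    rw [eq_top_iff]
    intro x _
    have hx : x ∈ Algebra.adjoin K (S : Set R) := hS ▸ Algebra.mem_top
    rw [Algebra.mem_adjoin_iff] at hx
    refine Subring.closure_le.2 ?_ hx
    rintro y (⟨k, rfl⟩ | hyS)
    · apply Subring.subset_closure
      simp only [Set.mem_iUnion]
      exact ⟨0, Finset.mem_range.2 (Nat.succ_pos m), SetLike.algebraMap_mem_graded 𝒜 k⟩
    · have hdec := DirectSum.sum_support_decompose 𝒜 y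
      rw [show y = _ from hdec.symm]
      apply Subring.sum_mem
      intro n hn
      apply Subring.subset_closure
      simp only [Set.mem_iUnion]
      refine ⟨n, Finset.mem_range.2 (Nat.lt_succ_of_le ?_), (DirectSum.decompose 𝒜 y n).2⟩
      exact le_trans (Finset.le_sup (f := id) hn)
        (Finset.le_sup (f := fun x => (DirectSum.decompose 𝒜 x).support.sup id) hyS)
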